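/- Let s be an N×N complex skew-Hermitian matrix (sᴴ = −s) whose eigenvalues are iς₁, …, iς_N with ς_k ∈ ℝ. The real-linear endomorphism of the real vector space of N×N complex skew-Hermitian matrices defined by u ↦ −[s,[s,u]] (where [a,b] = ab − ba) admits a basis of eigenvectors, orthonormal with respect to the real inner product ⟨u,v⟩ = Re tr(u·vᴴ), in which the eigenvalue 0 occurs exactly N times and, for each pair 1 ≤ k < l ≤ N, the eigenvalue (ς_k − ς_l)² occurs exactly twice. -/

import Mathlib

open Matrix Complex

namespace RadialAux

attribute [local instance] LieRing.ofAssociativeRing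

variable {N : ℕ}

lemma rsmul_eq (r : ℝ) (M : Matrix (Fin N) (Fin N) ℂ) : r • M = (r : ℂ) • M := by
  ext i j; simp [Complex.real_smul]

noncomputable def E (v : Fin N → (Fin N → ℂ)) (k l : Fin N) : Matrix (Fin N) (Fin N) ℂ :=
  Matrix.vecMulVec (v k) (star (v l))

noncomputable def bas (v : Fin N → Fin N → ℂ) :
    (Fin N ⊕ ({q : Fin N × Fin N // q.1 < q.2} × Fin 2)) → Matrix (Fin N) (Fin N) ℂ
  | Sum.inl k => Complex.I • E v k k
  | Sum.inr (p, 0) => (((Real.sqrt 2)⁻¹ : ℝ) : ℂ) • (E v p.1.1 p.1.2 - E v p.1.2 p.1.1)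
  | Sum.inr (p, 1) => (((Real.sqrt 2)⁻¹ : ℝ) : ℂ) •
      Complex.I • (E v p.1.1 p.1.2 + E v p.1.2 p.1.1)

lemma E_conjTranspose (v : Fin N → (Fin N → ℂ)) (k l : Fin N) :
    (E v k l)ᴴ = E v l k := by
  ext i j
  simp [E, vecMulVec_apply, conjTranspose_apply, mul_comm]

lemma bas_skew (v : Fin N → Fin N → ℂ)
    (k : Fin N ⊕ ({q : Fin N × Fin N // q.1 < q.2} × Fin 2)) :
    (bas v k)ᴴ = -(bas v k) := by
  rcases k with k | ⟨p, j⟩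
  · simp [bas, conjTranspose_smul, E_conjTranspose, Complex.star_def]
  · fin_cases j <;>
      simp [bas, conjTranspose_smul, conjTranspose_sub, conjTranspose_add,
        E_conjTranspose, Complex.star_def, smul_sub, smul_add, map_inv₀, conj_ofReal]

variable {v : Fin N → Fin N → ℂ}
  (hv : ∀ k l, dotProduct (star (v k)) (v l) = if k = l then 1 else 0)

include hv in
lemma trace_E_mul (k l p q : Fin N) :
    Matrix.trace (E v k l * E v p q) =
      (if l = p then 1 else 0) * (if q = k then 1 else 0) := by
  have h1 := hv l p
  have h2 := hv q k
  simp only [dotProduct, Pi.star_apply] at h1 h2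
  calc Matrix.trace (E v k l * E v p q)
      = ∑ i, ∑ m, v k i * star (v l m) * (v p m * star (v q i)) := by
        simp [Matrix.trace, Matrix.diag, mul_apply, E, vecMulVec_apply]
    _ = (∑ m, star (v l m) * v p m) * (∑ i, star (v q i) * v k i) := by
        rw [Finset.sum_mul_sum]; rw [Finset.sum_comm]
        apply Finset.sum_congr rfl; intro m _
        apply Finset.sum_congr rfl; intro i _
        ring
    _ = _ := by rw [h1, h2]

lemma ite_prod_zero {a b : Prop} [Decidable a] [Decidable b] (h : ¬(a ∧ b)) :
    (if a then (1:ℂ) else 0) * (if b then 1 else 0) = 0 := by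
  by_cases ha : a <;> by_cases hb : b <;> simp_all

include hv in
lemma bas_orthonormal (k l : Fin N ⊕ ({q : Fin N × Fin N // q.1 < q.2} × Fin 2)) :
    (Matrix.trace (bas v k * (bas v l)ᴴ)).re = if k = l then 1 else 0 := by
  have h2 : ((Real.sqrt 2)⁻¹ : ℝ) * ((Real.sqrt 2)⁻¹ : ℝ) = 1/2 := by
    rw [← mul_inv, ← Real.sqrt_mul_self (by norm_num : (0:ℝ) ≤ 2)]
    norm_num
  have h2c : ((((Real.sqrt 2)⁻¹ : ℝ)) : ℂ) * ((((Real.sqrt 2)⁻¹ : ℝ)) : ℂ) = 1/2 := by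
    rw [← Complex.ofReal_mul, h2]; norm_num
  rcases k with k | ⟨⟨⟨k1, k2⟩, hk⟩, j⟩ <;> rcases l with l | ⟨⟨⟨l1, l2⟩, hl⟩, j'⟩
  · simp only [bas, Matrix.smul_mul, Matrix.mul_smul, conjTranspose_smul,
      E_conjTranspose, trace_smul, smul_eq_mul, Complex.star_def, Complex.conj_I,
      trace_E_mul hv, Sum.inl.injEq]
    obtain rfl | hne := eq_or_ne k l
    · simp
    · simp [hne, hne.symm]
  · replace hl : l1 < l2 := hl
    have hl' : l1 ≠ l2 := ne_of_lt hl
    fin_cases j' <;>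
      simp only [bas, Matrix.smul_mul, Matrix.mul_smul, Matrix.mul_sub, Matrix.mul_add,
        conjTranspose_smul, conjTranspose_sub, conjTranspose_add,
        E_conjTranspose, trace_smul, trace_sub, trace_add, smul_eq_mul,
        Complex.star_def, Complex.conj_I, map_inv₀, conj_ofReal,
        trace_E_mul hv, reduceCtorEq, if_false] <;>
      obtain rfl | h1 := eq_or_ne k l1 <;> obtain rfl | h2' := eq_or_ne k l2 <;>
      simp_all [eq_comm]
  · replace hk : k1 < k2 := hk
    have hk' : k1 ≠ k2 := ne_of_lt hk
    fin_cases j <;>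
      simp only [bas, Matrix.smul_mul, Matrix.mul_smul, Matrix.sub_mul, Matrix.add_mul,
        conjTranspose_smul, E_conjTranspose, trace_smul, trace_sub, trace_add,
        smul_eq_mul, Complex.star_def, Complex.conj_I, map_inv₀, conj_ofReal,
        trace_E_mul hv, reduceCtorEq, if_false] <;>
      obtain rfl | h1 := eq_or_ne l k1 <;> obtain rfl | h2' := eq_or_ne l k2 <;>
      simp_all [eq_comm]
  · replace hk : k1 < k2 := hk
    replace hl : l1 < l2 := hl
    have hk' : k1 ≠ k2 := ne_of_lt hk
    have hl' : l1 ≠ l2 := ne_of_lt hl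
    have hcross : ¬(k1 = l2 ∧ k2 = l1) := by
      rintro ⟨rfl, rfl⟩; exact absurd hl (lt_asymm hk)
    by_cases hp : k1 = l1 ∧ k2 = l2
    · obtain ⟨rfl, rfl⟩ := hp
      fin_cases j <;> fin_cases j' <;>
        simp only [bas, Matrix.smul_mul, Matrix.mul_smul, Matrix.sub_mul, Matrix.add_mul,
          Matrix.mul_sub, Matrix.mul_add,
          conjTranspose_smul, conjTranspose_sub, conjTranspose_add,
          E_conjTranspose, trace_smul, trace_sub, trace_add, smul_eq_mul,
          Complex.star_def, Complex.conj_I, map_inv₀, conj_ofReal,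
          trace_E_mul hv, Sum.inr.injEq, Prod.mk.injEq, Subtype.mk.injEq] <;>
        simp [hk', hk'.symm, h2c, Complex.ext_iff] <;>
        nlinarith [Real.mul_self_sqrt (by norm_num : (0:ℝ) ≤ 2)]
    · have e1 : (if k2 = l2 then (1:ℂ) else 0) * (if l1 = k1 then 1 else 0) = 0 :=
        ite_prod_zero (fun ⟨a, b⟩ => hp ⟨b.symm, a⟩)
      have e2 : (if k2 = l1 then (1:ℂ) else 0) * (if l2 = k1 then 1 else 0) = 0 :=
        ite_prod_zero (fun ⟨a, b⟩ => hcross ⟨b.symm, a⟩)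
      have e3 : (if k1 = l2 then (1:ℂ) else 0) * (if l1 = k2 then 1 else 0) = 0 :=
        ite_prod_zero (fun ⟨a, b⟩ => hcross ⟨a, b.symm⟩)
      have e4 : (if k1 = l1 then (1:ℂ) else 0) * (if l2 = k2 then 1 else 0) = 0 :=
        ite_prod_zero (fun ⟨a, b⟩ => hp ⟨a, b.symm⟩)
      have hpq : ((k1, k2) : Fin N × Fin N) ≠ (l1, l2) := by
        intro h; exact hp ⟨congrArg Prod.fst h, congrArg Prod.snd h⟩
      fin_cases j <;> fin_cases j' <;>
        simp only [bas, Matrix.smul_mul, Matrix.mul_smul, Matrix.sub_mul, Matrix.add_mul,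
          Matrix.mul_sub, Matrix.mul_add,
          conjTranspose_smul, conjTranspose_sub, conjTranspose_add,
          E_conjTranspose, trace_smul, trace_sub, trace_add, smul_eq_mul,
          Complex.star_def, Complex.conj_I, map_inv₀, conj_ofReal,
          trace_E_mul hv, e1, e2, e3, e4,
          Sum.inr.injEq, Prod.mk.injEq, Subtype.mk.injEq] <;>
        norm_num [hpq, Prod.mk.injEq, fun h : k1 = l1 ∧ k2 = l2 => hp h]


variable {s : Matrix (Fin N) (Fin N) ℂ} (hs : sᴴ = -s)
  {ς : Fin N → ℝ}
  (heig : ∀ k, s.mulVec (v k) = (Complex.I * (ς k : ℂ)) • v k)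

include heig in
lemma s_mul_E (k l : Fin N) : s * E v k l = (Complex.I * (ς k : ℂ)) • E v k l := by
  ext i j
  have h := congrFun (heig k) i
  simp only [mulVec, dotProduct, Pi.smul_apply, smul_eq_mul] at h
  simp only [E, mul_apply, vecMulVec_apply, Matrix.smul_apply, smul_eq_mul, Pi.star_apply]
  calc ∑ m, s i m * (v k m * star (v l j))
      = (∑ m, s i m * v k m) * star (v l j) := by rw [Finset.sum_mul]; exact Finset.sum_congr rfl fun m _ => by ring
    _ = Complex.I * (ς k : ℂ) * (v k i * star (v l j)) := by rw [h]; ring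

include hs heig in
lemma E_mul_s (k l : Fin N) : E v k l * s = (Complex.I * (ς l : ℂ)) • E v k l := by
  ext i j
  have h : ∑ m, star (v l m) * s m j = Complex.I * (ς l : ℂ) * star (v l j) := by
    have h2 : sᴴ.mulVec (v l) = (-(Complex.I * (ς l : ℂ))) • v l := by
      rw [hs, neg_mulVec, heig l, neg_smul]
    have h3 := congrFun h2 j
    simp only [mulVec, dotProduct, conjTranspose_apply, Pi.smul_apply, smul_eq_mul] at h3
    have := congrArg star h3
    simpa [Finset.sum_comm, star_sum, mul_comm] using this
  simp only [E, mul_apply, vecMulVec_apply, Matrix.smul_apply, smul_eq_mul, Pi.star_apply]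
  calc ∑ m, v k i * star (v l m) * s m j
      = v k i * ∑ m, star (v l m) * s m j := by
        rw [Finset.mul_sum]; exact Finset.sum_congr rfl fun m _ => by ring
    _ = Complex.I * (ς l : ℂ) * (v k i * star (v l j)) := by rw [h]; ring

include hs heig in
lemma bracket_E (k l : Fin N) :
    ⁅s, E v k l⁆ = (Complex.I * ((ς k : ℂ) - (ς l : ℂ))) • E v k l := by
  rw [Ring.lie_def, s_mul_E heig, E_mul_s hs heig]
  rw [← sub_smul]
  ring_nf

include hs heig in
lemma negsq_E (k l : Fin N) :
    -⁅s, ⁅s, E v k l⁆⁆ = (((ς k : ℂ) - (ς l : ℂ)) ^ 2) • E v k l := by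
  rw [bracket_E hs heig, lie_smul, bracket_E hs heig, smul_smul]
  rw [← neg_smul]
  congr 1
  ring_nf
  rw [Complex.I_sq]
  ring

include hs heig in
lemma bas_eigen (k : Fin N ⊕ ({q : Fin N × Fin N // q.1 < q.2} × Fin 2)) :
    -⁅s, ⁅s, bas v k⁆⁆ =
      (Sum.elim (fun _ => (0 : ℝ))
        (fun q => (ς q.1.1.1 - ς q.1.1.2) ^ 2) k) • bas v k := by
  rcases k with k | ⟨⟨⟨k1, k2⟩, hp⟩, j⟩
  · simp [bas, lie_smul, bracket_E hs heig]
  · have hA := negsq_E hs heig (v := v) k1 k2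
    have hB := negsq_E hs heig (v := v) k2 k1
    fin_cases j
    · show -⁅s, ⁅s, (((Real.sqrt 2)⁻¹ : ℝ) : ℂ) • (E v k1 k2 - E v k2 k1)⁆⁆ =
        ((ς k1 - ς k2) ^ 2 : ℝ) •
          ((((Real.sqrt 2)⁻¹ : ℝ) : ℂ) • (E v k1 k2 - E v k2 k1))
      rw [rsmul_eq]
      have h1 : -⁅s, ⁅s, (((Real.sqrt 2)⁻¹ : ℝ) : ℂ) • (E v k1 k2 - E v k2 k1)⁆⁆
          = (((Real.sqrt 2)⁻¹ : ℝ) : ℂ) •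
            ((-⁅s, ⁅s, E v k1 k2⁆⁆) - (-⁅s, ⁅s, E v k2 k1⁆⁆)) := by
        simp only [lie_smul, lie_sub]; module
      rw [h1, hA, hB]
      push_cast
      module
    · show -⁅s, ⁅s, (((Real.sqrt 2)⁻¹ : ℝ) : ℂ) • Complex.I • (E v k1 k2 + E v k2 k1)⁆⁆ =
        ((ς k1 - ς k2) ^ 2 : ℝ) •
          ((((Real.sqrt 2)⁻¹ : ℝ) : ℂ) • Complex.I • (E v k1 k2 + E v k2 k1))
      rw [rsmul_eq]
      have h1 : -⁅s, ⁅s, (((Real.sqrt 2)⁻¹ : ℝ) : ℂ) • Complex.I • (E v k1 k2 + E v k2 k1)⁆⁆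
          = (((Real.sqrt 2)⁻¹ : ℝ) : ℂ) • Complex.I •
              ((-⁅s, ⁅s, E v k1 k2⁆⁆) + (-⁅s, ⁅s, E v k2 k1⁆⁆)) := by
        simp only [lie_smul, lie_add]; module
      rw [h1, hA, hB]
      push_cast
      module


include hv in
lemma bas_span (u : Matrix (Fin N) (Fin N) ℂ) (hu : uᴴ = -u) :
    u ∈ Submodule.span ℝ (Set.range (bas v)) := by
  set V : Matrix (Fin N) (Fin N) ℂ := Matrix.of (fun i k => v k i) with hVdef
  have hV1 : Vᴴ * V = 1 := by
    ext k l
    have := hv k l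
    simp only [dotProduct, Pi.star_apply] at this
    simpa [Matrix.mul_apply, Matrix.conjTranspose_apply, hVdef, Matrix.one_apply] using this
  have hV2 : V * Vᴴ = 1 := mul_eq_one_comm.mp hV1
  set C : Matrix (Fin N) (Fin N) ℂ := Vᴴ * u * V with hC
  have hCs : ∀ k l, C l k = -star (C k l) := by
    intro k l
    have h1 : Cᴴ = -C := by
      rw [hC]
      simp only [conjTranspose_mul, conjTranspose_conjTranspose, hu]
      simp [Matrix.mul_assoc, Matrix.neg_mul, Matrix.mul_neg]
    have := congrFun (congrFun h1 k) l
    simp only [conjTranspose_apply, Matrix.neg_apply] at this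
    simpa using congrArg star this
  have hu2 : u = V * C * Vᴴ := by
    rw [hC]
    calc u = (V * Vᴴ) * u * (V * Vᴴ) := by rw [hV2, one_mul, mul_one]
    _ = V * (Vᴴ * u * V) * Vᴴ := by simp only [Matrix.mul_assoc]
  have hdecomp : V * C * Vᴴ = ∑ k, ∑ l, C k l • E v k l := by
    ext i j
    simp only [Matrix.mul_apply, Matrix.sum_apply, Matrix.smul_apply, E,
      vecMulVec_apply, smul_eq_mul, conjTranspose_apply, Matrix.of_apply, Pi.star_apply, hVdef]
    calc ∑ q, (∑ p, v p i * C p q) * star (v q j)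
        = ∑ q, ∑ p, C p q * (v p i * star (v q j)) := by
          refine Finset.sum_congr rfl fun q _ => ?_
          rw [Finset.sum_mul]
          exact Finset.sum_congr rfl fun p _ => by ring
      _ = ∑ p, ∑ q, C p q * (v p i * star (v q j)) := Finset.sum_comm
  set T : Fin N → Fin N → Matrix (Fin N) (Fin N) ℂ :=
    fun k l => ((2⁻¹ : ℂ) * C k l) • E v k l + ((2⁻¹ : ℂ) * C l k) • E v l k with hT
  have hsum : u = ∑ k, ∑ l, T k l := by
    have hswap : ∑ k, ∑ l, ((2⁻¹ : ℂ) * C l k) • E v l k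
        = ∑ k, ∑ l, ((2⁻¹ : ℂ) * C k l) • E v k l := Finset.sum_comm
    calc u = V * C * Vᴴ := hu2
      _ = ∑ k, ∑ l, C k l • E v k l := hdecomp
      _ = ∑ k, ∑ l, T k l := by
          rw [hT]
          simp only [Finset.sum_add_distrib]
          rw [hswap, ← Finset.sum_add_distrib]
          refine Finset.sum_congr rfl fun k _ => ?_
          rw [← Finset.sum_add_distrib]
          refine Finset.sum_congr rfl fun l _ => ?_
          rw [← add_smul]
          congr 1
          ring
  have key : ∀ (k l : Fin N), k < l → T k l ∈ Submodule.span ℝ (Set.range (bas v)) := by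
    intro k l hkl
    have hb0 : bas v (Sum.inr (⟨(k, l), hkl⟩, 0)) =
        (((Real.sqrt 2)⁻¹ : ℝ) : ℂ) • (E v k l - E v l k) := rfl
    have hb1 : bas v (Sum.inr (⟨(k, l), hkl⟩, 1)) =
        (((Real.sqrt 2)⁻¹ : ℝ) : ℂ) • Complex.I • (E v k l + E v l k) := rfl
    have hs2 : (Real.sqrt 2) * ((Real.sqrt 2)⁻¹) = 1 := by
      rw [mul_inv_cancel₀]
      positivity
    have hm0 : E v k l - E v l k ∈ Submodule.span ℝ (Set.range (bas v)) := by
      have : E v k l - E v l k = (Real.sqrt 2 : ℝ) • bas v (Sum.inr (⟨(k, l), hkl⟩, 0)) := by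
        rw [hb0, rsmul_eq, smul_smul, ← Complex.ofReal_mul, hs2]
        norm_num
      rw [this]
      exact Submodule.smul_mem _ _ (Submodule.subset_span (Set.mem_range_self _))
    have hm1 : Complex.I • (E v k l + E v l k) ∈ Submodule.span ℝ (Set.range (bas v)) := by
      have : Complex.I • (E v k l + E v l k) =
          (Real.sqrt 2 : ℝ) • bas v (Sum.inr (⟨(k, l), hkl⟩, 1)) := by
        rw [hb1, rsmul_eq, smul_smul, ← Complex.ofReal_mul, hs2]
        norm_num
      rw [this]
      exact Submodule.smul_mem _ _ (Submodule.subset_span (Set.mem_range_self _))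
    have hTkl : T k l = ((C k l).re / 2 : ℝ) • (E v k l - E v l k)
        + ((C k l).im / 2 : ℝ) • (Complex.I • (E v k l + E v l k)) := by
      rw [hT]
      simp only
      rw [hCs k l, rsmul_eq, rsmul_eq]
      have hc : C k l = ((C k l).re : ℂ) + ((C k l).im : ℂ) * Complex.I :=
        (Complex.re_add_im _).symm
      have hcs : -star (C k l) = -((C k l).re : ℂ) + ((C k l).im : ℂ) * Complex.I := by
        rw [Complex.star_def]
        rw [← Complex.re_add_im (C k l)]
        simp [Complex.ext_iff]
      rw [hcs]
      nth_rewrite 1 [hc]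
      push_cast
      module
    rw [hTkl]
    exact Submodule.add_mem _ (Submodule.smul_mem _ _ hm0) (Submodule.smul_mem _ _ hm1)
  have hmem : ∀ (k l : Fin N), T k l ∈ Submodule.span ℝ (Set.range (bas v)) := by
    intro k l
    rcases lt_trichotomy k l with h | rfl | h
    · exact key k l h
    · have hTkk : T k k = (C k k).im • bas v (Sum.inl k) := by
        rw [hT]
        simp only
        have hre : ((C k k).re : ℂ) = 0 := by
          have h2 := congrArg Complex.re (hCs k k)
          rw [Complex.neg_re, Complex.star_def, Complex.conj_re] at h2
          have h3 : (C k k).re = 0 := by linarith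
          norm_num [h3]
        show _ = (C k k).im • (Complex.I • E v k k)
        rw [rsmul_eq, smul_smul, ← add_smul]
        congr 1
        rw [← Complex.re_add_im (C k k), hre]
        push_cast
        simp [Complex.ext_iff]
        ring
      rw [hTkk]
      exact Submodule.smul_mem _ _ (Submodule.subset_span (Set.mem_range_self _))
    · have : T k l = T l k := by rw [hT]; exact add_comm _ _
      rw [this]
      exact key l k h
  rw [hsum]
  exact Submodule.sum_mem _ fun k _ => Submodule.sum_mem _ fun l _ => hmem k l


end RadialAux

/-- The operator `u ↦ -[s,[s,u]]` on the real vector space of `N × N` complex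
skew-Hermitian matrices, for `s` skew-Hermitian with eigenvalues `i ς k`, admits
an orthonormal eigenbasis (for the inner product `Re tr(u vᴴ)`) in which the
eigenvalue `0` occurs exactly `N` times and each eigenvalue `(ς k - ς l)²`
(for `k < l`) occurs exactly twice. -/
theorem radial_curvature_eigenbasis_unitaryGroup
    {N : ℕ} (s : Matrix (Fin N) (Fin N) ℂ) (hs : sᴴ = -s)
    (ς : Fin N → ℝ) (v : Fin N → (Fin N → ℂ))
    (hv : ∀ k l, dotProduct (star (v k)) (v l) = if k = l then 1 else 0)
    (heig : ∀ k, s.mulVec (v k) = (Complex.I * (ς k : ℂ)) • v k) :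
    ∃ b : (Fin N ⊕ ({q : Fin N × Fin N // q.1 < q.2} × Fin 2)) →
        Matrix (Fin N) (Fin N) ℂ,
      (∀ k, (b k)ᴴ = -(b k)) ∧
      (∀ k l, (Matrix.trace (b k * (b l)ᴴ)).re = if k = l then 1 else 0) ∧
      (∀ k, -⁅s, ⁅s, b k⁆⁆ =
        (Sum.elim (fun _ => (0 : ℝ))
          (fun q => (ς q.1.1.1 - ς q.1.1.2) ^ 2) k) • b k) ∧
      (∀ u : Matrix (Fin N) (Fin N) ℂ, uᴴ = -u →
        u ∈ Submodule.span ℝ (Set.range b)) := by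
  exact ⟨RadialAux.bas v, RadialAux.bas_skew v,
    RadialAux.bas_orthonormal hv,
    RadialAux.bas_eigen hs heig,
    fun u hu => RadialAux.bas_span hv u hu⟩
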